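/- The greedy algorithm for Maximum Preference Coverage can be arbitrarily bad in the presence of negative entries: for every n ≥ 2 there exists a preference matrix P for which greedy selection (choosing at each step the term with maximum marginal coverage gain) achieves coverage 1 while the optimum achieves coverage n. -/

import Mathlib

open scoped Classical

noncomputable def PCov {n m : ℕ} (P : Fin n → Fin m → ℝ) (S : Finset (Fin n)) : ℕ :=
  (Finset.univ.filter (fun j : Fin m => 0 < ∑ i ∈ S, P i j)).card

/-- Marginal coverage gain of adding term `w` to the selection `T`. -/
noncomputable def gain {n m : ℕ} (P : Fin n → Fin m → ℝ) (T : Finset (Fin n))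
    (w : Fin n) : ℤ :=
  (PCov P (insert w T) : ℤ) - PCov P T

/-- Selections reachable by the greedy algorithm: start from `∅` and repeatedly
add a term of maximum marginal gain, provided that gain is positive. -/
inductive GreedyReach {n m : ℕ} (P : Fin n → Fin m → ℝ) : Finset (Fin n) → Prop
  | empty : GreedyReach P ∅
  | step (T : Finset (Fin n)) (w : Fin n) : GreedyReach P T → w ∉ T →
      0 < gain P T w → (∀ w', gain P T w' ≤ gain P T w) →
      GreedyReach P (insert w T)

/-- The greedy algorithm stops at `T` when no term gives positive marginal gain. -/
def GreedyTerminal {n m : ℕ} (P : Fin n → Fin m → ℝ) (T : Finset (Fin n)) : Prop :=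
  ∀ w, gain P T w ≤ 0

/-- Greedy can be arbitrarily bad with negative entries: for every `n ≥ 2` there
is a preference matrix on which every terminal greedy run achieves coverage 1
while the optimum achieves coverage `n`. -/
noncomputable def badP (n : ℕ) : Fin (2^n) → Fin n → ℝ := fun i j =>
  if (i : ℕ) = 0 then 0
  else if (i : ℕ) < 2^(j : ℕ) then -1
  else if (i : ℕ) < 2^((j : ℕ)+1) then 1
  else 0

lemma badP_eq {n : ℕ} (i : Fin (2^n)) (hi : (i : ℕ) ≠ 0) (j : Fin n) :
    badP n i j = if (j : ℕ) = Nat.log 2 i then 1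
      else if Nat.log 2 (i : ℕ) < (j : ℕ) then -1 else 0 := by
  have h1 : ∀ x : ℕ, ((i : ℕ) < 2^x ↔ Nat.log 2 (i : ℕ) < x) := fun x =>
    (Nat.log_lt_iff_lt_pow one_lt_two hi).symm
  unfold badP
  rcases lt_trichotomy (j : ℕ) (Nat.log 2 (i : ℕ)) with h | h | h
  · rw [if_neg hi, if_neg, if_neg, if_neg (by omega), if_neg (by omega)]
    · rw [h1]; omega
    · rw [h1]; omega
  · rw [if_neg hi, if_neg, if_pos, if_pos h]
    · rw [h1]; omega
    · rw [h1]; omega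
  · rw [if_neg hi, if_pos, if_neg (by omega), if_pos h]
    rw [h1]; omega

lemma log_lt_n {n : ℕ} (i : Fin (2^n)) (hi : (i : ℕ) ≠ 0) : Nat.log 2 (i : ℕ) < n :=
  (Nat.log_lt_iff_lt_pow one_lt_two hi).mpr i.isLt

lemma pcov_empty {N m : ℕ} (P : Fin N → Fin m → ℝ) : PCov P ∅ = 0 := by
  simp [PCov]

lemma pcov_singleton_zero {n : ℕ} (i : Fin (2^n)) (hi : (i : ℕ) = 0) :
    PCov (badP n) {i} = 0 := by
  unfold PCov
  rw [Finset.card_eq_zero]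
  ext j
  simp [badP, hi, Fin.val_eq_zero_iff.mp hi]

lemma pcov_singleton {n : ℕ} (i : Fin (2^n)) (hi : (i : ℕ) ≠ 0) :
    PCov (badP n) {i} = 1 := by
  unfold PCov
  have h : (Finset.univ.filter (fun j : Fin n => 0 < ∑ k ∈ ({i} : Finset (Fin (2^n))), badP n k j))
      = {⟨Nat.log 2 (i : ℕ), log_lt_n i hi⟩} := by
    ext j
    simp only [Finset.mem_filter, Finset.mem_univ, true_and, Finset.sum_singleton,
      Finset.mem_singleton, badP_eq i hi j, Fin.ext_iff]
    split_ifs with h1 h2 <;> norm_num <;> omega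
  rw [h, Finset.card_singleton]

lemma pcov_pair_le {n : ℕ} (i w : Fin (2^n)) (hi : (i : ℕ) ≠ 0) :
    PCov (badP n) (insert w {i}) ≤ 1 := by
  by_cases hwi : w = i
  · rw [hwi, Finset.insert_eq_self.mpr (Finset.mem_singleton_self i),
      pcov_singleton i hi]
  · have hsum : ∀ j, ∑ k ∈ insert w ({i} : Finset (Fin (2^n))), badP n k j
        = badP n w j + badP n i j := by
      intro j
      rw [Finset.sum_insert (by simpa using hwi), Finset.sum_singleton]
    by_cases hw0 : (w : ℕ) = 0
    · -- row w is zero; coverage same as {i}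
      unfold PCov
      apply le_trans (le_of_eq ?_) (le_of_eq (pcov_singleton i hi))
      unfold PCov
      congr 1
      apply Finset.filter_congr
      intro j _
      rw [hsum j]; simp [badP, hw0, Fin.val_eq_zero_iff.mp hw0]
    · -- both nonzero: covered columns ⊆ {min ci cw}
      unfold PCov
      apply Finset.card_le_one.mpr
      intro a ha b hb
      have key : ∀ j : Fin n, 0 < ∑ k ∈ insert w ({i} : Finset (Fin (2^n))), badP n k j →
          (j : ℕ) = min (Nat.log 2 (i : ℕ)) (Nat.log 2 (w : ℕ)) := by
        intro j hj
        rw [hsum j, badP_eq i hi j, badP_eq w hw0 j] at hj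
        split_ifs at hj <;> first | omega | (norm_num at hj)
      rw [Finset.mem_filter] at ha hb
      exact Fin.ext ((key a ha.2).trans (key b hb.2).symm)

lemma gain_singleton_nonpos {n : ℕ} (i w : Fin (2^n)) (hi : (i : ℕ) ≠ 0) :
    gain (badP n) {i} w ≤ 0 := by
  unfold gain
  have h1 := pcov_pair_le i w hi
  have h2 := pcov_singleton i hi
  omega

lemma gain_empty {n : ℕ} (w : Fin (2^n)) :
    gain (badP n) ∅ w = (PCov (badP n) {w} : ℤ) := by
  unfold gain
  rw [show (insert w (∅ : Finset (Fin (2^n)))) = {w} by simp, pcov_empty]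
  ring

lemma sum_col {n : ℕ} (j : Fin n) : ∑ i : Fin (2^n), badP n i j = 1 := by
  have hrw : ∑ i : Fin (2^n), badP n i j
      = ∑ k ∈ Finset.range (2^n), (fun k : ℕ => if k = 0 then (0:ℝ)
          else if k < 2^(j : ℕ) then -1
          else if k < 2^((j : ℕ)+1) then 1 else 0) k := by
    rw [← Fin.sum_univ_eq_sum_range]
    exact Finset.sum_congr rfl (fun i _ => rfl)
  have h1 : (1:ℕ) ≤ 2^(j : ℕ) := Nat.one_le_two_pow
  have h2 : 2^(j : ℕ) ≤ 2^((j : ℕ)+1) := Nat.pow_le_pow_right (by norm_num) (by omega)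
  have h3 : 2^((j : ℕ)+1) ≤ 2^n := Nat.pow_le_pow_right (by norm_num) (by omega)
  rw [hrw, Finset.range_eq_Ico,
    ← Finset.sum_Ico_consecutive _ (Nat.zero_le (2^((j:ℕ)+1))) h3,
    ← Finset.sum_Ico_consecutive _ (Nat.zero_le (2^(j:ℕ))) h2,
    ← Finset.sum_Ico_consecutive _ (Nat.zero_le 1) h1]
  have e0 : ∑ k ∈ Finset.Ico 0 1, (fun k : ℕ => if k = 0 then (0:ℝ)
      else if k < 2^(j : ℕ) then -1 else if k < 2^((j : ℕ)+1) then 1 else 0) k = 0 := by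
    norm_num
  have e1 : ∑ k ∈ Finset.Ico 1 (2^(j:ℕ)), (fun k : ℕ => if k = 0 then (0:ℝ)
      else if k < 2^(j : ℕ) then -1 else if k < 2^((j : ℕ)+1) then 1 else 0) k
      = -((2^(j:ℕ) : ℝ) - 1) := by
    rw [Finset.sum_congr rfl (g := fun _ => (-1:ℝ)) ?_, Finset.sum_const, Nat.card_Ico,
      nsmul_eq_mul]
    · push_cast [h1]; ring
    · intro k hk
      simp only [Finset.mem_Ico] at hk
      show (if k = 0 then (0:ℝ) else if k < 2^(j:ℕ) then -1
        else if k < 2^((j:ℕ)+1) then 1 else 0) = -1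
      rw [if_neg (by omega), if_pos hk.2]
  have e2 : ∑ k ∈ Finset.Ico (2^(j:ℕ)) (2^((j:ℕ)+1)), (fun k : ℕ => if k = 0 then (0:ℝ)
      else if k < 2^(j : ℕ) then -1 else if k < 2^((j : ℕ)+1) then 1 else 0) k
      = (2^(j:ℕ) : ℝ) := by
    have hc : 2^((j:ℕ)+1) - 2^(j:ℕ) = 2^(j:ℕ) := by rw [pow_succ]; omega
    rw [Finset.sum_congr rfl (g := fun _ => (1:ℝ)) ?_, Finset.sum_const, Nat.card_Ico,
      hc, nsmul_eq_mul, mul_one]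
    · push_cast; ring
    · intro k hk
      simp only [Finset.mem_Ico] at hk
      show (if k = 0 then (0:ℝ) else if k < 2^(j:ℕ) then -1
        else if k < 2^((j:ℕ)+1) then 1 else 0) = 1
      rw [if_neg (by omega), if_neg (by omega), if_pos hk.2]
  have e3 : ∑ k ∈ Finset.Ico (2^((j:ℕ)+1)) (2^n), (fun k : ℕ => if k = 0 then (0:ℝ)
      else if k < 2^(j : ℕ) then -1 else if k < 2^((j : ℕ)+1) then 1 else 0) k = 0 := by
    apply Finset.sum_eq_zero
    intro k hk
    simp only [Finset.mem_Ico] at hk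
    show (if k = 0 then (0:ℝ) else if k < 2^(j:ℕ) then -1
      else if k < 2^((j:ℕ)+1) then 1 else 0) = 0
    rw [if_neg (by omega), if_neg (by omega), if_neg (by omega)]
  rw [e0, e1, e2, e3]
  ring

lemma pcov_univ {n : ℕ} : PCov (badP n) Finset.univ = n := by
  unfold PCov
  have h : (Finset.univ.filter (fun j : Fin n => 0 < ∑ i : Fin (2^n), badP n i j))
      = Finset.univ := by
    apply Finset.filter_true_of_mem
    intro j _
    rw [sum_col j]
    norm_num
  rw [h, Finset.card_univ, Fintype.card_fin]

lemma reach_classify {n : ℕ} (T : Finset (Fin (2^n))) (h : GreedyReach (badP n) T) :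
    T = ∅ ∨ ∃ i : Fin (2^n), (i : ℕ) ≠ 0 ∧ T = {i} := by
  induction h with
  | empty => exact Or.inl rfl
  | step T w hT hw hg hmax ih =>
    rcases ih with rfl | ⟨i, hi0, rfl⟩
    · right
      refine ⟨w, ?_, by simp⟩
      intro hw0
      rw [gain_empty, pcov_singleton_zero w hw0] at hg
      exact absurd hg (by norm_num)
    · exact absurd hg (not_lt.mpr (gain_singleton_nonpos i w hi0))

theorem greedy_arbitrarily_bad (n : ℕ) (hn : 2 ≤ n) :
    ∃ (N M : ℕ) (P : Fin N → Fin M → ℝ),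
      (∀ T : Finset (Fin N), GreedyReach P T → GreedyTerminal P T → PCov P T = 1) ∧
      (∃ S : Finset (Fin N), PCov P S = n) := by
  refine ⟨2^n, n, badP n, ?_, ⟨Finset.univ, pcov_univ⟩⟩
  intro T hreach hterm
  rcases reach_classify T hreach with rfl | ⟨i, hi0, rfl⟩
  · exfalso
    have h1 : (1 : ℕ) < 2^n := Nat.one_lt_two_pow_iff.mpr (by omega)
    have h2 := hterm ⟨1, h1⟩
    rw [gain_empty, pcov_singleton (⟨1, h1⟩ : Fin (2^n)) (by simp)] at h2
    norm_num at h2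
  · exact pcov_singleton i hi0
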